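/- Let $Y_{k-1} \in \mathbb{R}^{p\times q}$, $T \in \mathbb{R}^{p\times q}$, $\gamma > 0$, and set $Y_k = \begin{bmatrix} 0 & Y_{k-1} \\ Y_{k-1} & 2\gamma T \end{bmatrix} \in \mathbb{R}^{2p \times 2q}$ (block structure: the extra rows/columns correspond to appropriate dimensions with $Y_{k-1}$ appearing twice). Define $\Gamma = (I_p + Y_{k-1}Y_{k-1}^{\T})^{-1} Y_{k-1} T^{\T}$ and $\Psi = I_p + Y_{k-1}Y_{k-1}^{\T} + 4\gamma^2 T (I_q + Y_{k-1}^{\T}Y_{k-1})^{-1} T^{\T}$. Then $(I_{2p} + Y_k Y_k^{\T})^{-1} = \begin{bmatrix} I_p & -2\gamma\Gamma \\ 0 & I_p \end{bmatrix} \begin{bmatrix} (I_p + Y_{k-1}Y_{k-1}^{\T})^{-1} & 0 \\ 0 & \Psi^{-1} \end{bmatrix} \begin{bmatrix} I_p & 0 \\ -2\gamma\Gamma^{\T} & I_p \end{bmatrix}$. -/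

import Mathlib

open Matrix

theorem stmt2 {p q : ℕ} (Y T : Matrix (Fin p) (Fin q) ℝ) (γ : ℝ) (hγ : 0 < γ)
    (Γ Ψ : Matrix (Fin p) (Fin p) ℝ)
    (hΓ : Γ = ((1 : Matrix (Fin p) (Fin p) ℝ) + Y * Yᵀ)⁻¹ * (Y * Tᵀ))
    (hΨ : Ψ = 1 + Y * Yᵀ +
      (4 * γ ^ 2) • (T * ((1 : Matrix (Fin q) (Fin q) ℝ) + Yᵀ * Y)⁻¹ * Tᵀ)) :
    ((1 : Matrix (Fin p ⊕ Fin p) (Fin p ⊕ Fin p) ℝ) +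
        Matrix.fromBlocks 0 Y Y ((2 * γ) • T) * (Matrix.fromBlocks 0 Y Y ((2 * γ) • T))ᵀ)⁻¹
      = Matrix.fromBlocks 1 ((-(2 * γ)) • Γ) 0 1 *
          Matrix.fromBlocks (((1 : Matrix (Fin p) (Fin p) ℝ) + Y * Yᵀ)⁻¹) 0 0 (Ψ⁻¹) *
          Matrix.fromBlocks 1 0 ((-(2 * γ)) • Γᵀ) 1 := by
  have htr : ∀ {a b : ℕ} (M : Matrix (Fin a) (Fin b) ℝ), Mᴴ = Mᵀ := by
    intro a b M; ext i j; simp [conjTranspose_apply]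
  set A : Matrix (Fin p) (Fin p) ℝ := 1 + Y * Yᵀ with hAdef
  set Aq : Matrix (Fin q) (Fin q) ℝ := 1 + Yᵀ * Y with hAqdef
  have hApd : A.PosDef := by
    have := Matrix.posSemidef_self_mul_conjTranspose Y
    rw [htr] at this
    exact Matrix.PosDef.one.add_posSemidef this
  have hAqpd : Aq.PosDef := by
    have := Matrix.posSemidef_conjTranspose_mul_self Y
    rw [htr] at this
    exact Matrix.PosDef.one.add_posSemidef this
  have hAd : IsUnit A.det := (Matrix.isUnit_iff_isUnit_det A).mp hApd.isUnit
  have hAqd : IsUnit Aq.det := (Matrix.isUnit_iff_isUnit_det Aq).mp hAqpd.isUnit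
  have hAinv : A⁻¹ * A = 1 := Matrix.nonsing_inv_mul A hAd
  have hAinv' : A * A⁻¹ = 1 := Matrix.mul_nonsing_inv A hAd
  have hAqinv : Aq⁻¹ * Aq = 1 := Matrix.nonsing_inv_mul Aq hAqd
  have hAqinv' : Aq * Aq⁻¹ = 1 := Matrix.mul_nonsing_inv Aq hAqd
  have hΨpd : Ψ.PosDef := by
    rw [hΨ]
    have h1 : ((2*γ) • T * Aq⁻¹ * ((2*γ) • T)ᴴ).PosSemidef :=
      (hAqpd.posSemidef.inv).mul_mul_conjTranspose_same ((2*γ) • T)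
    have h2 : (2*γ) • T * Aq⁻¹ * ((2*γ) • T)ᴴ = (4 * γ ^ 2) • (T * Aq⁻¹ * Tᵀ) := by
      rw [htr, transpose_smul]
      rw [Matrix.smul_mul, Matrix.smul_mul, Matrix.mul_smul, smul_smul]
      ring_nf
    rw [h2] at h1
    exact hApd.add_posSemidef h1
  have hΨd : IsUnit Ψ.det := (Matrix.isUnit_iff_isUnit_det Ψ).mp hΨpd.isUnit
  have hΨinv' : Ψ * Ψ⁻¹ = 1 := Matrix.mul_nonsing_inv Ψ hΨd
  -- push-through identity
  have hpush : Yᵀ * A⁻¹ = Aq⁻¹ * Yᵀ := by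
    have h : Aq * (Yᵀ * A⁻¹) = Aq * (Aq⁻¹ * Yᵀ) := by
      rw [← Matrix.mul_assoc, ← Matrix.mul_assoc, hAqinv', Matrix.one_mul]
      have h2 : Aq * Yᵀ = Yᵀ * A := by
        rw [hAdef, hAqdef]
        simp [Matrix.add_mul, Matrix.mul_add, Matrix.mul_assoc]
      rw [h2, Matrix.mul_assoc, hAinv', Matrix.mul_one]
    calc Yᵀ * A⁻¹ = Aq⁻¹ * (Aq * (Yᵀ * A⁻¹)) := by rw [← Matrix.mul_assoc, hAqinv, Matrix.one_mul]
    _ = Aq⁻¹ * (Aq * (Aq⁻¹ * Yᵀ)) := by rw [h]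
    _ = Aq⁻¹ * Yᵀ := by rw [← Matrix.mul_assoc, ← Matrix.mul_assoc, hAqinv, Matrix.one_mul]
  have hAsymm : A⁻¹ᵀ = A⁻¹ := by
    have : Aᵀ = A := by rw [hAdef]; simp [transpose_add, transpose_mul]
    rw [Matrix.transpose_nonsing_inv, this]
  have hΓT : Γᵀ = T * Yᵀ * A⁻¹ := by
    rw [hΓ, Matrix.transpose_mul, Matrix.transpose_mul, hAsymm, transpose_transpose, Matrix.mul_assoc]
  -- key identity : Ψ = A + (4γ²)•(T*Tᵀ) - (4γ²)•(T*Yᵀ*A⁻¹*Y*Tᵀ)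
  have hkey : T * Tᵀ - T * Yᵀ * A⁻¹ * (Y * Tᵀ) = T * Aq⁻¹ * Tᵀ := by
    have h1 : T * Yᵀ * A⁻¹ * (Y * Tᵀ) = T * Aq⁻¹ * (Yᵀ * Y) * Tᵀ := by
      rw [Matrix.mul_assoc T Yᵀ A⁻¹, hpush]
      simp [Matrix.mul_assoc]
    rw [h1]
    have h2 : T * Tᵀ = T * Aq⁻¹ * Aq * Tᵀ := by rw [Matrix.mul_assoc T Aq⁻¹ Aq, hAqinv, Matrix.mul_one]
    rw [h2, hAqdef]
    simp only [Matrix.mul_add, Matrix.add_mul, Matrix.mul_one, Matrix.one_mul]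
    abel
  apply Matrix.inv_eq_right_inv
  rw [Matrix.fromBlocks_transpose, Matrix.fromBlocks_multiply]
  have hM : (1 : Matrix (Fin p ⊕ Fin p) (Fin p ⊕ Fin p) ℝ) = Matrix.fromBlocks 1 0 0 1 :=
    (Matrix.fromBlocks_one).symm
  rw [hM]
  rw [Matrix.fromBlocks_add]
  rw [← Matrix.mul_assoc]
  rw [Matrix.fromBlocks_multiply, Matrix.fromBlocks_multiply, Matrix.fromBlocks_multiply]
  have c2 : (2:ℝ) * γ ≠ 0 := by positivity
  have hAΓ : A * Γ = Y * Tᵀ := by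
    rw [hΓ, ← Matrix.mul_assoc, hAinv', Matrix.one_mul]
  have hΨ2 : -(2 * γ) • (2 * γ) • (T * Yᵀ * Γ) +
      (1 + (Y * Yᵀ + (2 * γ) • (2 * γ) • (T * Tᵀ))) = Ψ := by
    rw [hΨ, ← hkey, hΓ, ← Matrix.mul_assoc (T * Yᵀ) A⁻¹ (Y * Tᵀ)]
    module
  have hΨ3 : -(2 * γ) • (2 * γ) • (T * Yᵀ * Γ * Ψ⁻¹) +
      (1 + (Y * Yᵀ + (2 * γ) • (2 * γ) • (T * Tᵀ))) * Ψ⁻¹ = 1 := by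
    have h4 := congrArg (fun M => M * Ψ⁻¹) hΨ2
    rw [Matrix.add_mul, Matrix.smul_mul, Matrix.smul_mul, hΨinv'] at h4
    exact h4
  rw [Matrix.fromBlocks_inj]
  refine ⟨?_, ?_, ?_, ?_⟩
  · simp only [Matrix.transpose_zero, Matrix.transpose_smul, Matrix.mul_zero, Matrix.zero_mul,
      Matrix.mul_one, Matrix.one_mul, add_zero, zero_add, Matrix.smul_mul, Matrix.mul_smul]
    rw [← hAdef, ← Matrix.mul_assoc A Γ Ψ⁻¹, hAΓ]
    simp only [neg_smul]
    rw [neg_add_cancel, Matrix.zero_mul, smul_zero, neg_zero, add_zero, hAinv']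
  · simp only [Matrix.transpose_zero, Matrix.transpose_smul, Matrix.mul_zero, Matrix.zero_mul,
      Matrix.mul_one, Matrix.one_mul, add_zero, zero_add, Matrix.smul_mul, Matrix.mul_smul]
    rw [← hAdef, ← Matrix.mul_assoc A Γ Ψ⁻¹, hAΓ]
    simp only [neg_smul]
    rw [neg_add_cancel]
  · simp only [Matrix.transpose_zero, Matrix.transpose_smul, Matrix.mul_zero, Matrix.zero_mul,
      Matrix.mul_one, Matrix.one_mul, add_zero, zero_add, Matrix.smul_mul, Matrix.mul_smul]
    rw [← Matrix.mul_assoc (T * Yᵀ) Γ Ψ⁻¹, hΨ3, Matrix.one_mul, hΓT]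
    simp only [neg_smul]
    rw [add_neg_cancel]
  · simp only [Matrix.transpose_zero, Matrix.transpose_smul, Matrix.mul_zero, Matrix.zero_mul,
      Matrix.mul_one, Matrix.one_mul, add_zero, zero_add, Matrix.smul_mul, Matrix.mul_smul]
    rw [← Matrix.mul_assoc (T * Yᵀ) Γ Ψ⁻¹]
    exact hΨ3
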